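/- For M symmetric positive definite and A symmetric positive semidefinite, the matrix D = ((M + A)^{-1} M)^m M^{-1} is positive definite for every natural number m. -/

import Mathlib

open Matrix

lemma posDef_mul_mul_conjTranspose {n : ℕ} {A B : Matrix (Fin n) (Fin n) ℝ}
    (hA : A.PosDef) (hB : IsUnit B.det) : (B * A * Bᴴ).PosDef := by
  refine Matrix.PosDef.of_dotProduct_mulVec_pos (Matrix.isHermitian_mul_mul_conjTranspose B hA.1) fun x hx => ?_
  have hBH : IsUnit (Bᴴ).det := by
    rw [Matrix.det_conjTranspose]; exact hB.star
  have hx' : Bᴴ *ᵥ x ≠ 0 :=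
    ((Matrix.mulVec_injective_iff_isUnit.mpr ((Matrix.isUnit_iff_isUnit_det _).mpr hBH)).ne_iff' (Matrix.mulVec_zero _)).2 hx
  simpa only [star_mulVec, conjTranspose_conjTranspose, dotProduct_mulVec,
    vecMul_vecMul, Matrix.mul_assoc] using hA.dotProduct_mulVec_pos hx'

/-- For `M` SPD and `A` symmetric positive semidefinite,
`D = ((M + A)⁻¹ M)^m M⁻¹` is positive definite for every `m : ℕ`. -/
theorem diffusion_matrix_posDef {n : ℕ} (M A : Matrix (Fin n) (Fin n) ℝ)
    (hM : M.PosDef) (hA : A.PosSemidef) (m : ℕ) :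
    ((((M + A)⁻¹ * M) ^ m) * M⁻¹).PosDef := by
  have hMA : (M + A).PosDef := hM.add_posSemidef hA
  have hMdet : IsUnit M.det := hM.det_pos.ne'.isUnit
  have hMAdet : IsUnit (M + A).det := hMA.det_pos.ne'.isUnit
  set C : Matrix (Fin n) (Fin n) ℝ := (M + A)⁻¹ * M with hC
  have hCH : Cᴴ = M * (M + A)⁻¹ := by
    rw [hC, conjTranspose_mul, Matrix.conjTranspose_nonsing_inv, hM.1.eq, hMA.1.eq]
  have hCdet : IsUnit C.det := by
    rw [hC, Matrix.det_mul]
    exact (Matrix.isUnit_nonsing_inv_det _ hMAdet).mul hMdet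
  induction m using Nat.twoStepInduction with
  | zero => simpa using hM.inv
  | one =>
    have : C * M⁻¹ = (M + A)⁻¹ := by
      rw [hC, Matrix.mul_assoc, Matrix.mul_nonsing_inv M hMdet, Matrix.mul_one]
    simpa [this] using hMA.inv
  | more m ih _ =>
    have key : C ^ (m + 2) * M⁻¹ = C * (C ^ m * M⁻¹) * Cᴴ := by
      rw [hCH]
      calc C ^ (m + 2) * M⁻¹ = C ^ (m + 1) * ((M + A)⁻¹ * (M * M⁻¹)) := by
            rw [pow_succ, hC]; noncomm_ring
        _ = C ^ (m + 1) * (M + A)⁻¹ := by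
            rw [Matrix.mul_nonsing_inv M hMdet, Matrix.mul_one]
        _ = C * (C ^ m * M⁻¹) * (M * (M + A)⁻¹) := by
            rw [pow_succ',
              show C * (C ^ m * M⁻¹) * (M * (M + A)⁻¹)
                = C * C ^ m * (M⁻¹ * M) * (M + A)⁻¹ by noncomm_ring,
              Matrix.nonsing_inv_mul M hMdet, Matrix.mul_one]
        _ = C * (C ^ m * M⁻¹) * (M * (M + A)⁻¹) := rfl
    rw [key]
    exact posDef_mul_mul_conjTranspose ih hCdet
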